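/- Let k ≥ 1 be an integer and let G be a connected k-regular finite simple graph whose second largest adjacency eigenvalue satisfies λ₂(G) ≤ 0. Then G has at most 2k vertices, with equality if and only if G is isomorphic to the complete bipartite graph K_{k,k}. -/

import Mathlib

open Polynomial

/-- The adjacency matrix of a simple graph over `ℝ` is Hermitian. -/
theorem adjMatrix_isHermitian {V : Type*} [Fintype V] [DecidableEq V]
    (G : SimpleGraph V) [DecidableRel G.Adj] : (G.adjMatrix ℝ).IsHermitian := by
  rw [Matrix.IsHermitian, Matrix.conjTranspose_eq_transpose_of_trivial]
  exact G.isSymm_adjMatrix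

/-- The multiset of adjacency eigenvalues (with multiplicity) of a finite simple graph. -/
noncomputable def eigMultiset {V : Type*} [Fintype V] [DecidableEq V]
    (G : SimpleGraph V) [DecidableRel G.Adj] : Multiset ℝ :=
  Multiset.map (adjMatrix_isHermitian G).eigenvalues Finset.univ.val

/-- The second largest adjacency eigenvalue (with multiplicity) of a finite simple graph:
the second-to-last entry of the nondecreasing sorted list of eigenvalues. -/
noncomputable def secondEigenvalue {V : Type*} [Fintype V] [DecidableEq V]
    (G : SimpleGraph V) [DecidableRel G.Adj] : ℝ :=
  ((eigMultiset G).sort (· ≤ ·)).getD (((eigMultiset G).sort (· ≤ ·)).length - 2) 0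

/-- The largest adjacency eigenvalue (spectral radius) of a finite simple graph. -/
noncomputable def largestEigenvalue {V : Type*} [Fintype V] [DecidableEq V]
    (G : SimpleGraph V) [DecidableRel G.Adj] : ℝ :=
  ((eigMultiset G).sort (· ≤ ·)).getD (((eigMultiset G).sort (· ≤ ·)).length - 1) 0

/-- The orthogonal polynomials `F_i^{(k)}`. -/
noncomputable def Fpoly (k : ℕ) : ℕ → Polynomial ℝ
  | 0 => 1
  | 1 => X
  | 2 => X ^ 2 - C (k : ℝ)
  | n + 3 => X * Fpoly k (n + 2) - C ((k : ℝ) - 1) * Fpoly k (n + 1)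

/-- `G_i = Σ_{j=0}^i F_j`. -/
noncomputable def Gpoly (k : ℕ) (i : ℕ) : Polynomial ℝ :=
  ∑ j ∈ Finset.range (i + 1), Fpoly k j

/-- The tridiagonal matrix `T(k,t,c)`: superdiagonal `(k, k-1, …, k-1)`,
subdiagonal `(1, …, 1, c)`, diagonal chosen so that every row sums to `k`. -/
noncomputable def Tmat (k t : ℕ) (c : ℝ) : Matrix (Fin t) (Fin t) ℝ :=
  Matrix.of fun i j =>
    if (j : ℕ) = (i : ℕ) + 1 then (if (i : ℕ) = 0 then (k : ℝ) else (k : ℝ) - 1)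
    else if (i : ℕ) = (j : ℕ) + 1 then (if (i : ℕ) = t - 1 then c else 1)
    else if i = j then
      (k : ℝ) - (if (i : ℕ) + 1 < t then (if (i : ℕ) = 0 then (k : ℝ) else (k : ℝ) - 1) else 0)
        - (if 0 < (i : ℕ) then (if (i : ℕ) = t - 1 then c else 1) else 0)
    else 0

/-- `M(k,t,c) = 1 + Σ_{i=0}^{t-3} k (k-1)^i + k (k-1)^{t-2} / c`. -/
noncomputable def Mbound (k t : ℕ) (c : ℝ) : ℝ :=
  1 + (∑ i ∈ Finset.range (t - 2), (k : ℝ) * ((k : ℝ) - 1) ^ i)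
    + (k : ℝ) * ((k : ℝ) - 1) ^ (t - 2) / c

section H
open Matrix

section Helpers
variable {n : Type*} [Fintype n] [DecidableEq n] {A : Matrix n n ℝ}

lemma herm_pow_eq (hA : A.IsHermitian) (m : ℕ) :
    A ^ m = (hA.eigenvectorUnitary : Matrix n n ℝ) * (Matrix.diagonal hA.eigenvalues) ^ m *
      star (hA.eigenvectorUnitary : Matrix n n ℝ) := by
  induction m with
  | zero => simp [Matrix.mem_unitaryGroup_iff.mp (hA.eigenvectorUnitary).2]
  | succ m ih =>
      have hsp := hA.spectral_theorem
      have hd : Matrix.diagonal ((RCLike.ofReal : ℝ → ℝ) ∘ hA.eigenvalues)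
          = Matrix.diagonal hA.eigenvalues := by simp
      rw [hd, Unitary.conjStarAlgAut_apply] at hsp
      calc A ^ (m+1) = A ^ m * A := pow_succ A m
        _ = ((hA.eigenvectorUnitary : Matrix n n ℝ) * (Matrix.diagonal hA.eigenvalues) ^ m *
              star (hA.eigenvectorUnitary : Matrix n n ℝ)) *
            ((hA.eigenvectorUnitary : Matrix n n ℝ) * (Matrix.diagonal hA.eigenvalues) *
              star (hA.eigenvectorUnitary : Matrix n n ℝ)) := by rw [← ih, ← hsp]
        _ = (hA.eigenvectorUnitary : Matrix n n ℝ) * ((Matrix.diagonal hA.eigenvalues) ^ m *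
              ((star (hA.eigenvectorUnitary : Matrix n n ℝ) * (hA.eigenvectorUnitary : Matrix n n ℝ)) *
              (Matrix.diagonal hA.eigenvalues))) *
              star (hA.eigenvectorUnitary : Matrix n n ℝ) := by
            simp only [Matrix.mul_assoc]
        _ = _ := by
            rw [Matrix.mem_unitaryGroup_iff'.mp (hA.eigenvectorUnitary).2, Matrix.one_mul,
              ← pow_succ]

lemma herm_trace_pow (hA : A.IsHermitian) (m : ℕ) :
    (A ^ m).trace = ∑ i, hA.eigenvalues i ^ m := by
  rw [herm_pow_eq hA m, Matrix.trace_mul_cycle,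
    Matrix.mem_unitaryGroup_iff'.mp (hA.eigenvectorUnitary).2, Matrix.one_mul,
    Matrix.diagonal_pow, Matrix.trace_diagonal]
  simp [Pi.pow_apply]

lemma herm_cube_eq (hA : A.IsHermitian) (c : ℝ)
    (h : ∀ i, hA.eigenvalues i ^ 3 = c * hA.eigenvalues i) :
    A ^ 3 = c • A := by
  have h1 := herm_pow_eq hA 1
  rw [pow_one, pow_one] at h1
  rw [herm_pow_eq hA 3, Matrix.diagonal_pow]
  have hv : (hA.eigenvalues ^ 3 : n → ℝ) = c • hA.eigenvalues := by
    funext i; simpa using h i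
  rw [hv, Matrix.diagonal_smul, Matrix.mul_smul, Matrix.smul_mul, ← h1]
end Helpers

section Helpers2
variable {n : Type*} [Fintype n] [DecidableEq n] {A : Matrix n n ℝ}

lemma herm_exists_eigen (hA : A.IsHermitian) (c : ℝ) {v : n → ℝ} (hv : v ≠ 0)
    (hAv : A.mulVec v = c • v) : ∃ i, hA.eigenvalues i = c := by
  have hdet : (A - c • (1 : Matrix n n ℝ)).det = 0 := by
    rw [← Matrix.exists_mulVec_eq_zero_iff]
    refine ⟨v, hv, ?_⟩
    rw [Matrix.sub_mulVec, Matrix.smul_mulVec, Matrix.one_mulVec, hAv, sub_self]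
  have h1 := herm_pow_eq hA 1
  rw [pow_one, pow_one] at h1
  have hsub : A - c • (1 : Matrix n n ℝ)
      = (hA.eigenvectorUnitary : Matrix n n ℝ) *
        (Matrix.diagonal hA.eigenvalues - c • 1) *
        star (hA.eigenvectorUnitary : Matrix n n ℝ) := by
    rw [Matrix.mul_sub, Matrix.sub_mul, ← h1]
    congr 1
    rw [Matrix.mul_smul, Matrix.smul_mul, Matrix.mul_one,
      Matrix.mem_unitaryGroup_iff.mp (hA.eigenvectorUnitary).2]
  rw [hsub, Matrix.det_mul, Matrix.det_mul] at hdet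
  have hu : (hA.eigenvectorUnitary : Matrix n n ℝ).det *
      (star (hA.eigenvectorUnitary : Matrix n n ℝ)).det = 1 := by
    rw [← Matrix.det_mul, Matrix.mem_unitaryGroup_iff.mp (hA.eigenvectorUnitary).2,
      Matrix.det_one]
  have hu1 : (hA.eigenvectorUnitary : Matrix n n ℝ).det ≠ 0 := fun h => by
    rw [h, zero_mul] at hu; exact zero_ne_one hu
  have hu2 : (star (hA.eigenvectorUnitary : Matrix n n ℝ)).det ≠ 0 := fun h => by
    rw [h, mul_zero] at hu; exact zero_ne_one hu
  have hdet2 : (Matrix.diagonal hA.eigenvalues - c • 1).det = 0 := by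
    rcases mul_eq_zero.mp hdet with h' | h'
    · rcases mul_eq_zero.mp h' with h'' | h''
      · exact absurd h'' hu1
      · exact h''
    · exact absurd h' hu2
  have hd : Matrix.diagonal hA.eigenvalues - c • (1 : Matrix n n ℝ)
      = Matrix.diagonal (fun i => hA.eigenvalues i - c) := by
    ext i j
    by_cases h : i = j <;>
      simp [Matrix.sub_apply, Matrix.smul_apply, Matrix.diagonal_apply, Matrix.one_apply, h]
  rw [hd, Matrix.det_diagonal] at hdet2
  obtain ⟨i, _, hi⟩ := Finset.prod_eq_zero_iff.mp hdet2
  exact ⟨i, by linarith [sub_eq_zero.mp hi]⟩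
end Helpers2

section Helpers3

lemma sorted_atmost_one_pos (l : List ℝ) (hs : l.Pairwise (· ≤ ·))
    (h2 : l.getD (l.length - 2) 0 ≤ 0) :
    l.countP (fun x => decide (0 < x)) ≤ 1 := by
  by_contra h
  push_neg at h
  set n := l.length with hn
  have hsplit : l.countP (fun x => decide (0 < x)) =
      (l.take (n-1)).countP (fun x => decide (0 < x)) +
      (l.drop (n-1)).countP (fun x => decide (0 < x)) := by
    conv_lhs => rw [← l.take_append_drop (n-1)]
    rw [List.countP_append]
  have hdrople : (l.drop (n-1)).countP (fun x => decide (0 < x)) ≤ 1 := by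
    calc (l.drop (n-1)).countP (fun x => decide (0 < x)) ≤ (l.drop (n-1)).length :=
          List.countP_le_length
      _ ≤ 1 := by rw [List.length_drop]; omega
  have htake : 0 < (l.take (n-1)).countP (fun x => decide (0 < x)) := by omega
  obtain ⟨x, hxmem, hx⟩ := List.countP_pos_iff.mp htake
  obtain ⟨p, hp, hpx⟩ := List.mem_iff_getElem.mp hxmem
  rw [List.length_take] at hp
  have hpn : p < n - 1 := lt_of_lt_of_le hp (min_le_left _ _)
  have hn2 : n - 2 < n := by omega
  have hple : p ≤ n - 2 := by omega
  have hgx : l[p]'(by omega) = x := by rw [← hpx, List.getElem_take]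
  have hrel : l[p]'(by omega) ≤ l[n-2]'(by omega) :=
    hs.rel_get_of_le (by exact hple)
  have hx' : (0:ℝ) < x := by simpa using hx
  rw [List.getD_eq_getElem l 0 hn2] at h2
  rw [hgx] at hrel
  linarith

lemma atmost_one_pos {α : Type*} [Fintype α] [DecidableEq α] (f : α → ℝ)
    (h2 : ((Multiset.map f Finset.univ.val).sort (· ≤ ·)).getD
      (((Multiset.map f Finset.univ.val).sort (· ≤ ·)).length - 2) 0 ≤ 0)
    {i j : α} (hij : i ≠ j) (hi : 0 < f i) : f j ≤ 0 := by
  by_contra hj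
  push_neg at hj
  set M := Multiset.map f Finset.univ.val with hM
  have hsorted : (M.sort (· ≤ ·)).Pairwise (· ≤ ·) := Multiset.pairwise_sort _ _
  have hcount : (M.sort (· ≤ ·)).countP (fun x => decide (0 < x)) ≤ 1 :=
    sorted_atmost_one_pos _ hsorted h2
  have hcoe : Multiset.countP (fun x => 0 < x) M ≤ 1 := by
    rw [← Multiset.sort_eq M (· ≤ ·), Multiset.coe_countP]
    exact hcount
  have hcard : Multiset.countP (fun x => 0 < x) M =
      (Finset.univ.filter (fun a => 0 < f a)).card := by
    rw [hM, Multiset.countP_map]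
    rfl
  have h2le : 2 ≤ (Finset.univ.filter (fun a => 0 < f a)).card := by
    apply Finset.one_lt_card.mpr
    exact ⟨i, Finset.mem_filter.mpr ⟨Finset.mem_univ _, hi⟩,
      j, Finset.mem_filter.mpr ⟨Finset.mem_univ _, hj⟩, hij⟩
  omega

end Helpers3

section Helpers4
variable {V : Type*} [Fintype V] [DecidableEq V] (G : SimpleGraph V) [DecidableRel G.Adj]

lemma cube_apply (u v : V) : ((G.adjMatrix ℝ)^3) u v =
    ∑ a ∈ G.neighborFinset u, ∑ b ∈ G.neighborFinset a, G.adjMatrix ℝ b v := by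
  have h3 : (G.adjMatrix ℝ)^3 = G.adjMatrix ℝ * (G.adjMatrix ℝ * G.adjMatrix ℝ) := by
    rw [pow_succ, pow_two, mul_assoc]
  rw [h3, SimpleGraph.adjMatrix_mul_apply]
  exact Finset.sum_congr rfl fun a _ => by rw [SimpleGraph.adjMatrix_mul_apply]

variable {G}
variable {k : ℕ} (hreg : G.IsRegularOfDegree k)
    (hA3 : (G.adjMatrix ℝ)^3 = ((k:ℝ)^2) • G.adjMatrix ℝ)

include hreg hA3

lemma tri_free : ∀ u a b : V, G.Adj u a → G.Adj a b → ¬ G.Adj b u := by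
  intro u a b hua hab hbu
  have h0 : ∑ a ∈ G.neighborFinset u, ∑ b ∈ G.neighborFinset a, G.adjMatrix ℝ b u = 0 := by
    rw [← cube_apply, hA3, Matrix.smul_apply, SimpleGraph.adjMatrix_apply,
      if_neg (G.irrefl), smul_zero]
  have hnn : ∀ a' ∈ G.neighborFinset u, (0:ℝ) ≤ ∑ b' ∈ G.neighborFinset a', G.adjMatrix ℝ b' u :=
    fun a' _ => Finset.sum_nonneg fun b' _ => by
      simp only [SimpleGraph.adjMatrix_apply]; positivity
  have h1 : (1:ℝ) ≤ ∑ b' ∈ G.neighborFinset a, G.adjMatrix ℝ b' u := by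
    have := Finset.single_le_sum (f := fun b' => G.adjMatrix ℝ b' u)
      (fun b' _ => by simp only [SimpleGraph.adjMatrix_apply]; positivity)
      ((SimpleGraph.mem_neighborFinset _ _ _).mpr hab)
    simp only [SimpleGraph.adjMatrix_apply, if_pos hbu] at this
    exact this
  have h2 : (1:ℝ) ≤ ∑ a' ∈ G.neighborFinset u, ∑ b' ∈ G.neighborFinset a', G.adjMatrix ℝ b' u :=
    le_trans h1 (Finset.single_le_sum hnn ((SimpleGraph.mem_neighborFinset _ _ _).mpr hua))
  linarith

lemma nbhd_closed : ∀ u v a b : V, G.Adj u v → G.Adj u a → G.Adj a b → G.Adj b v := by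
  intro u v a b huv hua hab
  by_contra hbv
  have hsum : ∑ a ∈ G.neighborFinset u, ∑ b ∈ G.neighborFinset a, G.adjMatrix ℝ b v
      = (k:ℝ)^2 := by
    rw [← cube_apply, hA3, Matrix.smul_apply, SimpleGraph.adjMatrix_apply,
      if_pos huv, smul_eq_mul, mul_one]
  have hle1 : ∀ b' : V, G.adjMatrix ℝ b' v ≤ 1 := fun b' => by
    rw [SimpleGraph.adjMatrix_apply]; split <;> norm_num
  have hinnerle : ∀ a' : V, ∑ b' ∈ G.neighborFinset a', G.adjMatrix ℝ b' v ≤ (k:ℝ) := by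
    intro a'
    calc ∑ b' ∈ G.neighborFinset a', G.adjMatrix ℝ b' v
        ≤ ∑ _b' ∈ G.neighborFinset a', (1:ℝ) := Finset.sum_le_sum fun b' _ => hle1 b'
      _ = (k:ℝ) := by
          rw [Finset.sum_const, nsmul_eq_mul, mul_one, SimpleGraph.card_neighborFinset_eq_degree,
            hreg a']
  have hstrict : ∑ b' ∈ G.neighborFinset a, G.adjMatrix ℝ b' v < (k:ℝ) := by
    have : ∑ b' ∈ G.neighborFinset a, G.adjMatrix ℝ b' v
        < ∑ _b' ∈ G.neighborFinset a, (1:ℝ) := by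
      apply Finset.sum_lt_sum (fun b' _ => hle1 b')
      exact ⟨b, (SimpleGraph.mem_neighborFinset _ _ _).mpr hab, by
        rw [SimpleGraph.adjMatrix_apply, if_neg hbv]; norm_num⟩
    calc ∑ b' ∈ G.neighborFinset a, G.adjMatrix ℝ b' v
        < ∑ _b' ∈ G.neighborFinset a, (1:ℝ) := this
      _ = (k:ℝ) := by
          rw [Finset.sum_const, nsmul_eq_mul, mul_one, SimpleGraph.card_neighborFinset_eq_degree,
            hreg a]
  have hlt : ∑ a' ∈ G.neighborFinset u, ∑ b' ∈ G.neighborFinset a', G.adjMatrix ℝ b' v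
      < ∑ _a' ∈ G.neighborFinset u, (k:ℝ) := by
    apply Finset.sum_lt_sum (fun a' _ => hinnerle a')
    exact ⟨a, (SimpleGraph.mem_neighborFinset _ _ _).mpr hua, hstrict⟩
  rw [Finset.sum_const, nsmul_eq_mul, SimpleGraph.card_neighborFinset_eq_degree, hreg u] at hlt
  rw [hsum] at hlt
  nlinarith [hlt]

end Helpers4

section Helpers5
variable {V : Type*} [Fintype V] [DecidableEq V] {G : SimpleGraph V} [DecidableRel G.Adj]
  {k : ℕ}

lemma build_iso (hk : 1 ≤ k) (hcard : Fintype.card V = 2*k)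
    (hreg : G.IsRegularOfDegree k)
    (htf : ∀ u a b : V, G.Adj u a → G.Adj a b → ¬ G.Adj b u)
    (hcl : ∀ u v a b : V, G.Adj u v → G.Adj u a → G.Adj a b → G.Adj b v)
    (hne : Nonempty V) :
    Nonempty (G ≃g completeBipartiteGraph (Fin k) (Fin k)) := by
  classical
  obtain ⟨u₀⟩ := hne
  have hNu : (G.neighborFinset u₀).Nonempty := by
    rw [← Finset.card_pos, SimpleGraph.card_neighborFinset_eq_degree, hreg u₀]; omega
  obtain ⟨v₀, hv₀⟩ := hNu
  have huv : G.Adj u₀ v₀ := (SimpleGraph.mem_neighborFinset _ _ _).mp hv₀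
  have hNeq : ∀ x y a : V, G.Adj x y → G.Adj x a →
      G.neighborFinset a = G.neighborFinset y := by
    intro x y a hxy hxa
    apply Finset.eq_of_subset_of_card_le
    · intro b hb
      exact (SimpleGraph.mem_neighborFinset _ _ _).mpr
        (hcl x y a b hxy hxa ((SimpleGraph.mem_neighborFinset _ _ _).mp hb)).symm
    · rw [SimpleGraph.card_neighborFinset_eq_degree, SimpleGraph.card_neighborFinset_eq_degree,
        hreg a, hreg y]
  set P := G.neighborFinset v₀ with hPdef
  set Q := G.neighborFinset u₀ with hQdef
  have hP : ∀ x ∈ P, G.neighborFinset x = Q :=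
    fun x hx => hNeq v₀ u₀ x huv.symm ((SimpleGraph.mem_neighborFinset _ _ _).mp hx)
  have hQ : ∀ y ∈ Q, G.neighborFinset y = P :=
    fun y hy => hNeq u₀ v₀ y huv ((SimpleGraph.mem_neighborFinset _ _ _).mp hy)
  have hdisj : Disjoint P Q := by
    rw [Finset.disjoint_left]
    intro x hxP hxQ
    exact htf u₀ v₀ x huv ((SimpleGraph.mem_neighborFinset _ _ _).mp hxP)
      (((SimpleGraph.mem_neighborFinset _ _ _).mp hxQ)).symm
  have hcardP : P.card = k := by
    rw [hPdef, SimpleGraph.card_neighborFinset_eq_degree, hreg v₀]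
  have hcardQ : Q.card = k := by
    rw [hQdef, SimpleGraph.card_neighborFinset_eq_degree, hreg u₀]
  have hunion : P ∪ Q = Finset.univ := by
    apply Finset.eq_univ_of_card
    rw [Finset.card_union_of_disjoint hdisj, hcardP, hcardQ, hcard]; omega
  have hmem : ∀ x : V, x ∉ P ↔ x ∈ Q := by
    intro x
    constructor
    · intro hx
      have : x ∈ P ∪ Q := hunion ▸ Finset.mem_univ x
      rcases Finset.mem_union.mp this with h | h
      · exact absurd h hx
      · exact h
    · intro hx hxP
      exact Finset.disjoint_left.mp hdisj hxP hx
  have hadj : ∀ x y : V, G.Adj x y ↔ ((x ∈ P ∧ y ∉ P) ∨ (x ∉ P ∧ y ∈ P)) := by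
    intro x y
    constructor
    · intro h
      by_cases hx : x ∈ P
      · left
        refine ⟨hx, (hmem y).mpr ?_⟩
        · rw [← hP x hx]
          exact (SimpleGraph.mem_neighborFinset _ _ _).mpr h
      · right
        refine ⟨hx, ?_⟩
        have hxQ := (hmem x).mp hx
        rw [← hQ x hxQ]
        exact (SimpleGraph.mem_neighborFinset _ _ _).mpr h
    · rintro (⟨hx, hy⟩ | ⟨hx, hy⟩)
      · have hyQ := (hmem y).mp hy
        have := hP x hx
        exact ((SimpleGraph.mem_neighborFinset _ _ _).mp (this ▸ hyQ))
      · have hxQ := (hmem x).mp hx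
        have := hQ x hxQ
        exact ((SimpleGraph.mem_neighborFinset _ _ _).mp (this ▸ hy))
  have ecard1 : Fintype.card {x : V // x ∈ P} = k := by
    rw [Fintype.card_coe, hcardP]
  have ecard2 : Fintype.card {x : V // ¬ x ∈ P} = k := by
    rw [Fintype.card_subtype_compl, ecard1, hcard]; omega
  let eP : {x : V // x ∈ P} ≃ Fin k := Fintype.equivFinOfCardEq ecard1
  let eN : {x : V // ¬ x ∈ P} ≃ Fin k := Fintype.equivFinOfCardEq ecard2
  let f : V ≃ (Fin k ⊕ Fin k) :=
    (Equiv.sumCompl (· ∈ P)).symm.trans (Equiv.sumCongr eP eN)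
  refine ⟨⟨f, ?_⟩⟩
  intro x y
  show (completeBipartiteGraph (Fin k) (Fin k)).Adj (f x) (f y) ↔ G.Adj x y
  by_cases hx : x ∈ P <;> by_cases hy : y ∈ P <;>
    simp [f, Equiv.sumCompl_symm_apply_of_pos, Equiv.sumCompl_symm_apply_of_neg,
      hx, hy, hadj, completeBipartiteGraph]

end Helpers5

theorem stmt1 {V : Type*} [Fintype V] [DecidableEq V] (k : ℕ) (hk : 1 ≤ k)
    (G : SimpleGraph V) [DecidableRel G.Adj]
    (hconn : G.Connected) (hreg : G.IsRegularOfDegree k)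
    (hlam : secondEigenvalue G ≤ 0) :
    Fintype.card V ≤ 2 * k ∧
      (Fintype.card V = 2 * k ↔
        Nonempty (G ≃g completeBipartiteGraph (Fin k) (Fin k))) := by
  classical
  have hne : Nonempty V := hconn.nonempty
  have hA : (G.adjMatrix ℝ).IsHermitian := adjMatrix_isHermitian G
  set A := G.adjMatrix ℝ with hAdef
  set lam := (adjMatrix_isHermitian G).eigenvalues with hlamdef
  set n := Fintype.card V with hndef
  have hkpos : (0:ℝ) < k := by exact_mod_cast hk
  -- trace identities
  have htr1 : ∑ i, lam i = 0 := by
    have h := herm_trace_pow (adjMatrix_isHermitian G) 1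
    simp only [pow_one] at h
    rw [← h, SimpleGraph.trace_adjMatrix]
  have htr2 : ∑ i, lam i ^ 2 = (n:ℝ) * k := by
    have h := herm_trace_pow (adjMatrix_isHermitian G) 2
    rw [← h, pow_two, Matrix.trace]
    have : ∀ u : V, (A * A) u u = ((k:ℕ) : ℝ) := by
      intro u
      rw [hAdef, SimpleGraph.adjMatrix_mul_self_apply_self]
      exact_mod_cast congrArg (Nat.cast : ℕ → ℝ) (hreg u)
    simp only [Matrix.diag_apply, ← hAdef, this]
    rw [Finset.sum_const, nsmul_eq_mul, Finset.card_univ]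
  -- k is an eigenvalue
  have heigk : ∃ i₀, lam i₀ = (k:ℝ) := by
    apply herm_exists_eigen (adjMatrix_isHermitian G) (k:ℝ) (v := fun _ => (1:ℝ))
    · intro h
      obtain ⟨x⟩ := hne
      have := congrFun h x
      norm_num at this
    · funext v
      rw [SimpleGraph.adjMatrix_mulVec_apply, Finset.sum_const, nsmul_eq_mul, mul_one,
        SimpleGraph.card_neighborFinset_eq_degree, hreg v]
      simp
  obtain ⟨i₀, hi₀⟩ := heigk
  -- all other eigenvalues nonpositive
  have hnonpos : ∀ i, i ≠ i₀ → lam i ≤ 0 := by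
    intro i hi
    refine atmost_one_pos lam ?_ (Ne.symm hi) (by rw [hi₀]; exact hkpos)
    have : eigMultiset G = Multiset.map lam Finset.univ.val := rfl
    rw [← this]
    exact hlam
  set s : Finset V := Finset.univ.erase i₀ with hsdef
  have hsum1 : ∑ i ∈ s, lam i = -(k:ℝ) := by
    have h0 := Finset.add_sum_erase Finset.univ lam (Finset.mem_univ i₀)
    rw [htr1, hi₀] at h0
    linarith
  have hsum2 : ∑ i ∈ s, lam i ^ 2 = (n:ℝ) * k - (k:ℝ)^2 := by
    have h0 := Finset.add_sum_erase Finset.univ (fun i => lam i ^ 2) (Finset.mem_univ i₀)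
    rw [htr2] at h0
    have h2 : lam i₀ ^ 2 = (k:ℝ)^2 := by rw [hi₀]
    rw [h2] at h0
    linarith
  have hmemnp : ∀ i ∈ s, lam i ≤ 0 := fun i hi =>
    hnonpos i (Finset.ne_of_mem_erase hi)
  have hlb : ∀ i ∈ s, -(k:ℝ) ≤ lam i := by
    intro i hi
    have h1 : ∑ j ∈ s, (-(lam j)) = (k:ℝ) := by
      rw [Finset.sum_neg_distrib, hsum1]; ring
    have := Finset.single_le_sum (f := fun j => -(lam j))
      (fun j hj => by simpa using hmemnp j hj) hi
    rw [h1] at this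
    linarith
  have hsq : ∀ i ∈ s, lam i ^ 2 ≤ (k:ℝ) * (-(lam i)) := by
    intro i hi
    nlinarith [hmemnp i hi, hlb i hi]
  have hkey : (n:ℝ) * k - (k:ℝ)^2 ≤ (k:ℝ)^2 := by
    calc (n:ℝ) * k - (k:ℝ)^2 = ∑ i ∈ s, lam i ^ 2 := hsum2.symm
      _ ≤ ∑ i ∈ s, (k:ℝ) * (-(lam i)) := Finset.sum_le_sum hsq
      _ = (k:ℝ) * ∑ i ∈ s, (-(lam i)) := by rw [Finset.mul_sum]
      _ = (k:ℝ)^2 := by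
          rw [Finset.sum_neg_distrib, hsum1]; ring
  have hcardle : n ≤ 2 * k := by
    have h1 : (n:ℝ) ≤ 2 * k := by nlinarith
    exact_mod_cast h1
  refine ⟨hcardle, ?_, ?_⟩
  · -- equality implies iso
    intro hcard
    have hcardR : (n:ℝ) = 2 * k := by exact_mod_cast hcard
    have hzero : ∑ i ∈ s, ((k:ℝ) * (-(lam i)) - lam i ^ 2) = 0 := by
      rw [Finset.sum_sub_distrib, hsum2, ← Finset.mul_sum, Finset.sum_neg_distrib, hsum1,
        hcardR]
      ring
    have hterm : ∀ i ∈ s, (k:ℝ) * (-(lam i)) - lam i ^ 2 = 0 := by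
      have := (Finset.sum_eq_zero_iff_of_nonneg
        (fun i hi => by linarith [hsq i hi])).mp hzero
      exact this
    have hval : ∀ i ∈ s, lam i = 0 ∨ lam i = -(k:ℝ) := by
      intro i hi
      have h := hterm i hi
      have : lam i * (lam i + (k:ℝ)) = 0 := by nlinarith
      rcases mul_eq_zero.mp this with h' | h'
      · exact Or.inl h'
      · right; linarith
    have hcube : ∀ i, lam i ^ 3 = (k:ℝ)^2 * lam i := by
      intro i
      by_cases hi : i = i₀
      · rw [hi, hi₀]; ring
      · rcases hval i (Finset.mem_erase.mpr ⟨hi, Finset.mem_univ i⟩) with h | h <;>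
          rw [h] <;> ring
    have hA3 : A ^ 3 = ((k:ℝ)^2) • A := herm_cube_eq (adjMatrix_isHermitian G) _ hcube
    exact build_iso hk hcard hreg (tri_free hreg hA3) (nbhd_closed hreg hA3) hne
  · -- iso implies equality
    rintro ⟨e⟩
    have := Fintype.card_congr e.toEquiv
    rw [hndef] at *
    rw [this]
    simp [two_mul]

end H
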